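/- Let F be a continuous cumulative distribution function on ℝ with F(0) = 0, and let k, n ∈ ℕ. Then for all x ≥ 0 at which the one-sided derivative ∂_± F^{*k}(x) exists, ∂_± ∫_{[0,x]} ∂_x^n g_k(s,x) dF^{*k}(s) = ∫_{[0,x]} ∂_x^{n+1} g_k(s,x) dF^{*k}(s) + C(k,n) ∂_± F^{*k}(x), where C(k,n) = (λ/c)^k (n choose k) ((q+λ)/c)^{n−k} (−1)^k for n ≥ k and C(k,n) = 0 for n < k. -/

import Mathlib

open MeasureTheory Filter Set Topology Metric

/-- `W` is the `q`-scale function of a spectrally negative Lévy process with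
Laplace exponent `ψ`: it vanishes on the negative half-line, is continuous on
`[0,∞)`, and its Laplace transform equals `1/(ψ(β) - q)` for `β > Φ(q)`. -/
def IsScaleFunction (ψ : ℝ → ℝ) (q : ℝ) (W : ℝ → ℝ) : Prop :=
  ContinuousOn W (Set.Ici 0) ∧ (∀ x < 0, W x = 0) ∧
    ∀ β : ℝ, sSup {y : ℝ | ψ y = q} < β →
      (∫ x in Set.Ioi (0 : ℝ), Real.exp (-β * x) * W x) = 1 / (ψ β - q)

/-- Laplace exponent of a spectrally negative compound Poisson process with
drift `c`, intensity `lam` and jump distribution `Pm` (of the negative of the jumps). -/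
noncomputable def cppExponent (c lam : ℝ) (Pm : Measure ℝ) (u : ℝ) : ℝ :=
  c * u + lam * ∫ s, (Real.exp (-u * s) - 1) ∂Pm

/-- `k`-fold convolution power of a measure on `ℝ`, with `convPow μ 0 = δ₀`. -/
noncomputable def convPow (μ : Measure ℝ) : ℕ → Measure ℝ
  | 0 => Measure.dirac 0
  | k + 1 => Measure.map (fun p : ℝ × ℝ => p.1 + p.2) ((convPow μ k).prod μ)

/-- The kernel `g_k(s,x) = ((λ/c)^k/k!) e^{-((q+λ)/c)(s-x)} (s-x)^k`. -/
noncomputable def gker (q lam c : ℝ) (k : ℕ) (s x : ℝ) : ℝ :=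
  ((lam / c) ^ k / Nat.factorial k) * Real.exp (-((q + lam) / c) * (s - x)) * (s - x) ^ k

lemma convPow_prob (μ : Measure ℝ) [IsProbabilityMeasure μ] (k : ℕ) :
    IsProbabilityMeasure (convPow μ k) := by
  induction k with
  | zero => exact Measure.dirac.isProbabilityMeasure
  | succ k ih =>
    haveI := ih
    exact Measure.isProbabilityMeasure_map (measurable_fst.add measurable_snd).aemeasurable

lemma convPow_supp (μ : Measure ℝ) [IsProbabilityMeasure μ] (hsupp : μ (Set.Iio 0) = 0) (k : ℕ) :
    convPow μ k (Set.Iio 0) = 0 := by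
  induction k with
  | zero => simp [convPow, Measure.dirac_apply' _ measurableSet_Iio]
  | succ k ih =>
    rw [convPow, Measure.map_apply (f := fun p : ℝ × ℝ => p.1 + p.2) (measurable_fst.add measurable_snd) measurableSet_Iio]
    refine le_antisymm ?_ zero_le
    have hsub : (fun p : ℝ × ℝ => p.1 + p.2) ⁻¹' Set.Iio 0 ⊆
        (Set.Iio 0 ×ˢ Set.univ) ∪ (Set.univ ×ˢ Set.Iio 0) := by
      rintro ⟨a, b⟩ h
      simp only [Set.mem_preimage, Set.mem_Iio] at h
      by_contra hcon
      simp only [Set.mem_union, Set.mem_prod, Set.mem_univ, Set.mem_Iio, not_or, not_and,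
        and_true, true_and, not_lt] at hcon
      linarith [hcon.1, hcon.2]
    calc ((convPow μ k).prod μ) ((fun p : ℝ × ℝ => p.1 + p.2) ⁻¹' Set.Iio 0)
        ≤ ((convPow μ k).prod μ) ((Set.Iio 0 ×ˢ Set.univ) ∪ (Set.univ ×ˢ Set.Iio 0)) :=
          measure_mono hsub
      _ ≤ ((convPow μ k).prod μ) (Set.Iio 0 ×ˢ Set.univ)
            + ((convPow μ k).prod μ) (Set.univ ×ˢ Set.Iio 0) := measure_union_le _ _
      _ = 0 := by rw [Measure.prod_prod, Measure.prod_prod, ih, hsupp]; simp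

lemma iterD_comp_sub (n : ℕ) (φ : ℝ → ℝ) (s t : ℝ) :
    iteratedDeriv n (fun u => φ (s - u)) t = (-1:ℝ)^n * iteratedDeriv n φ (s - t) := by
  have h1 : (fun u : ℝ => φ (s - u)) = fun u => (fun v => φ (s + v)) (-u) := by
    funext u; simp [sub_eq_add_neg]
  rw [h1, iteratedDeriv_comp_neg n (fun v => φ (s + v)) t, iteratedDeriv_comp_const_add]
  simp [sub_eq_add_neg, smul_eq_mul]

lemma expPow_contDiff (b : ℝ) (k : ℕ) :
    ContDiff ℝ (⊤:ℕ∞) (fun u : ℝ => Real.exp (b*u) * u^k) :=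
  (Real.contDiff_exp.comp (contDiff_const.mul contDiff_id)).mul (contDiff_id.pow k)

lemma expPow_deriv (b : ℝ) (k : ℕ) :
    deriv (fun u : ℝ => Real.exp (b*u) * u^k)
      = fun u => b * (Real.exp (b*u) * u^k) + (k:ℝ) * (Real.exp (b*u) * u^(k-1)) := by
  funext u
  have h0 : HasDerivAt (fun u : ℝ => b * u) b u := by
    simpa using (hasDerivAt_id u).const_mul b
  have h1 : HasDerivAt (fun u : ℝ => Real.exp (b*u)) (Real.exp (b*u) * b) u := h0.exp
  have h2 := (h1.mul (hasDerivAt_pow k u)).deriv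
  rw [show (fun u : ℝ => Real.exp (b*u) * u^k) = (fun u => Real.exp (b*u)) * fun x => x^k from rfl, h2]; ring

lemma iterD_combo (n : ℕ) (a₁ a₂ : ℝ) (f g : ℝ → ℝ) (hf : ContDiff ℝ (⊤:ℕ∞) f)
    (hg : ContDiff ℝ (⊤:ℕ∞) g) (x : ℝ) :
    iteratedDeriv n (fun u => a₁ * f u + a₂ * g u) x
      = a₁ * iteratedDeriv n f x + a₂ * iteratedDeriv n g x := by
  have hle : (n : WithTop ℕ∞) ≤ ((⊤:ℕ∞) : WithTop ℕ∞) := by exact_mod_cast le_top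
  have hf' : ContDiffOn ℝ n f univ := (hf.of_le hle).contDiffOn
  have hg' : ContDiffOn ℝ n g univ := (hg.of_le hle).contDiffOn
  have h1 : ContDiffOn ℝ n (fun u => a₁ * f u) univ := ((contDiff_const.mul hf).of_le hle).contDiffOn
  have h2 : ContDiffOn ℝ n (fun u => a₂ * g u) univ := ((contDiff_const.mul hg).of_le hle).contDiffOn
  simp only [← iteratedDerivWithin_univ]
  rw [show (fun u => a₁ * f u + a₂ * g u) = (fun u => a₁ * f u) + (fun u => a₂ * g u) from rfl,
    iteratedDerivWithin_add (mem_univ x) uniqueDiffOn_univ (h1 x (mem_univ x)) (h2 x (mem_univ x)),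
    iteratedDerivWithin_const_mul (mem_univ x) uniqueDiffOn_univ a₁ (hf' x (mem_univ x)),
    iteratedDerivWithin_const_mul (mem_univ x) uniqueDiffOn_univ a₂ (hg' x (mem_univ x))]

lemma iterD_expPow (b : ℝ) : ∀ (n k : ℕ),
    iteratedDeriv n (fun u : ℝ => Real.exp (b*u) * u^k) 0
      = if k ≤ n then (n.choose k : ℝ) * (Nat.factorial k : ℝ) * b^(n-k) else 0 := by
  intro n
  induction n with
  | zero =>
    intro k
    cases k with
    | zero => simp
    | succ m => simp [Nat.succ_ne_zero]
  | succ n ih =>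
    intro k
    rw [iteratedDeriv_succ', expPow_deriv,
      iterD_combo n b (k:ℝ) _ _ (expPow_contDiff b k) (expPow_contDiff b (k-1)) 0, ih k, ih (k-1)]
    rcases lt_trichotomy k (n+1) with hk | hk | hk
    · -- k ≤ n
      have hk' : k ≤ n := Nat.lt_succ_iff.mp hk
      rw [if_pos hk', if_pos (by omega : k ≤ n+1), if_pos (by omega : k-1 ≤ n)]
      cases k with
      | zero => simp [Nat.choose_zero_right, pow_succ]; ring
      | succ m =>
        have h3 : (m+1) - 1 = m := rfl
        have h1 : n + 1 - (m+1) = n - m := by omega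
        have h2 : n - m = (n - (m+1)) + 1 := by omega
        rw [h3, h1, h2, Nat.choose_succ_succ n m]
        push_cast [Nat.factorial_succ, pow_succ]
        ring
    · -- k = n+1
      subst hk
      rw [if_neg (by omega), if_pos le_rfl, if_pos (by omega : n+1-1 ≤ n)]
      have h3 : (n+1) - 1 = n := by omega
      rw [h3]
      push_cast [Nat.choose_self, Nat.sub_self, Nat.factorial_succ]
      ring
    · rw [if_neg (by omega), if_neg (by omega), if_neg (by omega)]
      simp

lemma boundary_deriv (ν : Measure ℝ) [IsFiniteMeasure ν] (hsupp : ν (Iio 0) = 0)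
    (f : ℝ → ℝ → ℝ) (hf : Continuous (fun p : ℝ × ℝ => f p.1 p.2))
    (x : ℝ) (hx : 0 ≤ x) (d : ℝ) (S : Set ℝ) (hS : S = Ici x ∨ S = Iic x)
    (hF : HasDerivWithinAt (fun t => (ν (Iic t)).toReal) d S x) :
    HasDerivWithinAt (fun t => (∫ s in Icc 0 t, f s t ∂ν) - ∫ s in Icc 0 x, f s t ∂ν)
      (f x x * d) S x := by
  set F : ℝ → ℝ := fun t => (ν (Iic t)).toReal with hFdef
  set G : ℝ → ℝ := fun t => (∫ s in Icc 0 t, f s t ∂ν) - ∫ s in Icc 0 x, f s t ∂ν with hGdef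
  rw [hasDerivWithinAt_iff_tendsto_slope] at hF ⊢
  have hGx : G x = 0 := sub_self _
  -- difference of F values as measures
  have hFdiff : ∀ t u : ℝ, t ≤ u → F u - F t = (ν (Ioc t u)).toReal := by
    intro t u htu
    have h1 : Iic u = Iic t ∪ Ioc t u := (Iic_union_Ioc_eq_Iic htu).symm
    have h2 : ν (Iic u) = ν (Iic t) + ν (Ioc t u) := by
      rw [h1, measure_union (Iic_disjoint_Ioc le_rfl) measurableSet_Ioc]
    simp only [hFdef, h2, ENNReal.toReal_add (measure_ne_top ν _) (measure_ne_top ν _)]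
    ring
  -- the key estimate
  have key : ∀ ε' > (0:ℝ), ∃ δ > (0:ℝ), ∀ t ∈ S \ {x}, |t - x| < δ →
      |slope G x t - f x x * slope F x t| ≤ ε' * |slope F x t| := by
    intro ε' hε'
    obtain ⟨δ, hδ, hball⟩ := Metric.continuousAt_iff.mp (hf.continuousAt
      (x := ((x : ℝ), (x : ℝ)))) ε' hε'
    refine ⟨δ, hδ, ?_⟩
    rintro t ⟨htS, htne⟩ htδ
    have htne' : t ≠ x := htne
    have hfb : ∀ s t' : ℝ, |s - x| < δ → |t' - x| < δ → |f s t' - f x x| ≤ ε' := by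
      intro s t' hs ht'
      have h := @hball (s, t') (by
        rw [Prod.dist_eq]; simp only [Real.dist_eq]
        exact max_lt hs ht')
      rw [Real.dist_eq] at h
      exact h.le
    -- main pointwise bound : |G t - f x x * (F t - F x)| ≤ ε' * |F t - F x|
    have hmain : |G t - f x x * (F t - F x)| ≤ ε' * |F t - F x| := by
      rcases hS with rfl | rfl
      · -- S = Ici x, t > x
        have hxt : x < t := lt_of_le_of_ne htS (Ne.symm htne')
        have hsub : Icc 0 x ⊆ Icc 0 t := Icc_subset_Icc le_rfl hxt.le
        have hBeq : Icc 0 t \ Icc 0 x = Ioc x t := by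
          ext s; simp only [mem_diff, mem_Icc, mem_Ioc, not_and, not_le]
          constructor
          · rintro ⟨⟨h0, h1⟩, h2⟩; exact ⟨h2 h0, h1⟩
          · rintro ⟨h1, h2⟩; exact ⟨⟨le_trans hx h1.le, h2⟩, fun _ => h1⟩
        have hInt : IntegrableOn (fun s => f s t) (Icc 0 t) ν :=
          (hf.comp (continuous_id.prodMk continuous_const)).integrableOn_Icc
        have hG : G t = ∫ s in Ioc x t, f s t ∂ν := by
          rw [hGdef]
          simp only
          rw [← hBeq, integral_diff measurableSet_Icc hInt hsub]
        have hFt : F t - F x = (ν (Ioc x t)).toReal := hFdiff x t hxt.le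
        rw [hG, hFt]
        have hconst : f x x * (ν (Ioc x t)).toReal = ∫ s in Ioc x t, f x x ∂ν := by
          rw [setIntegral_const]; simp [mul_comm, Measure.real]
        rw [hconst, ← integral_sub (hInt.mono_set (by rw [← hBeq]; exact diff_subset))
          (integrableOn_const (measure_ne_top ν _))]
        calc |∫ s in Ioc x t, (f s t - f x x) ∂ν|
            = ‖∫ s in Ioc x t, (f s t - f x x) ∂ν‖ := (Real.norm_eq_abs _).symm
          _ ≤ ε' * (ν (Ioc x t)).toReal := by
              apply norm_setIntegral_le_of_norm_le_const (measure_lt_top ν _)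
              intro s hs
              rw [Real.norm_eq_abs]
              apply hfb
              · rw [abs_sub_lt_iff]
                constructor
                · calc s - x ≤ t - x := by linarith [hs.2]
                  _ ≤ |t - x| := le_abs_self _
                  _ < δ := htδ
                · linarith [hs.1]
              · exact htδ
          _ ≤ ε' * |(ν (Ioc x t)).toReal| := by
              apply mul_le_mul_of_nonneg_left (le_abs_self _) hε'.le
        -- and |F t - F x| = |(ν ...).toReal|
      · -- S = Iic x, t < x
        have hxt : t < x := lt_of_le_of_ne htS htne'
        have hsub : Icc 0 t ⊆ Icc 0 x := Icc_subset_Icc le_rfl hxt.le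
        have hA : IntegrableOn (fun s => f s t) (Icc 0 x) ν :=
          (hf.comp (continuous_id.prodMk continuous_const)).integrableOn_Icc
        have hG : G t = -∫ s in Icc 0 x \ Icc 0 t, f s t ∂ν := by
          rw [hGdef]
          simp only
          rw [integral_diff measurableSet_Icc hA hsub]
          ring
        have hν : ν (Ioc t x) = ν (Icc 0 x \ Icc 0 t) := by
          apply le_antisymm
          · calc ν (Ioc t x) ≤ ν ((Icc 0 x \ Icc 0 t) ∪ Iio 0) := by
                  apply measure_mono
                  intro s hs
                  rcases lt_or_ge s 0 with h | h
                  · exact Or.inr h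
                  · exact Or.inl ⟨⟨h, hs.2⟩, fun hmem => absurd hmem.2 (not_le.2 hs.1)⟩
              _ ≤ ν (Icc 0 x \ Icc 0 t) + ν (Iio 0) := measure_union_le _ _
              _ = ν (Icc 0 x \ Icc 0 t) := by rw [hsupp, add_zero]
          · apply measure_mono
            rintro s ⟨⟨h0, h1⟩, h2⟩
            simp only [mem_Icc, not_and, not_le] at h2
            rcases lt_or_ge t 0 with ht0 | ht0
            · exact ⟨lt_of_lt_of_le ht0 h0, h1⟩
            · exact ⟨h2 h0, h1⟩
        have hFt : F t - F x = -(ν (Icc 0 x \ Icc 0 t)).toReal := by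
          rw [← hν]
          have := hFdiff t x hxt.le
          linarith
        rw [hG, hFt]
        have hconst : f x x * -(ν (Icc 0 x \ Icc 0 t)).toReal
            = -∫ s in Icc 0 x \ Icc 0 t, f x x ∂ν := by
          rw [setIntegral_const]; simp [mul_comm, Measure.real]
        rw [hconst, ← neg_sub', abs_neg, ← integral_sub (hA.mono_set diff_subset)
          (integrableOn_const (measure_ne_top ν _))]
        rw [abs_neg]
        calc |∫ s in Icc 0 x \ Icc 0 t, (f s t - f x x) ∂ν|
            = ‖∫ s in Icc 0 x \ Icc 0 t, (f s t - f x x) ∂ν‖ := (Real.norm_eq_abs _).symm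
          _ ≤ ε' * (ν (Icc 0 x \ Icc 0 t)).toReal := by
              apply norm_setIntegral_le_of_norm_le_const (measure_lt_top ν _)
              rintro s ⟨⟨h0, h1⟩, h2⟩
              rw [Real.norm_eq_abs]
              simp only [mem_Icc, not_and, not_le] at h2
              apply hfb _ _ _ htδ
              rw [abs_sub_lt_iff]
              have hxtabs : x - t < δ := by
                calc x - t ≤ |t - x| := by rw [abs_sub_comm]; exact le_abs_self _
                _ < δ := htδ
              constructor
              · linarith
              · rcases lt_or_ge t 0 with ht0 | ht0
                · linarith
                · have := h2 h0; linarith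
          _ ≤ ε' * |(ν (Icc 0 x \ Icc 0 t)).toReal| :=
              mul_le_mul_of_nonneg_left (le_abs_self _) hε'.le
    -- convert to slopes
    have hslope : slope G x t - f x x * slope F x t
        = (G t - f x x * (F t - F x)) / (t - x) := by
      rw [slope_def_field, slope_def_field]
      field_simp [sub_ne_zero.2 htne']
      ring
    rw [hslope, abs_div]
    have hslopeF : |slope F x t| = |F t - F x| / |t - x| := by
      rw [slope_def_field, abs_div]
    rw [hslopeF, ← mul_div_assoc]
    exact (div_le_div_iff_of_pos_right (abs_pos.2 (sub_ne_zero.2 htne'))).mpr hmain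
  -- now conclude the tendsto
  have hzero : Tendsto (fun t => slope G x t - f x x * slope F x t) (𝓝[S \ {x}] x) (𝓝 0) := by
    rw [Metric.tendsto_nhds]
    intro ε hε
    set M := |d| + 1 with hM
    have hM0 : 0 < M := by positivity
    obtain ⟨δ, hδ, hkey⟩ := key (ε / (2 * M)) (by positivity)
    have h1 : ∀ᶠ t in 𝓝[S \ {x}] x, |t - x| < δ := by
      apply eventually_nhdsWithin_of_eventually_nhds
      have := Metric.ball_mem_nhds x hδ
      filter_upwards [this] with t ht
      rwa [Metric.mem_ball, Real.dist_eq] at ht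
    have h2 : ∀ᶠ t in 𝓝[S \ {x}] x, |slope F x t| < M := by
      have := hF.eventually (Metric.ball_mem_nhds d one_pos)
      filter_upwards [this] with t ht
      rw [Real.dist_eq] at ht
      calc |slope F x t| = |slope F x t - d + d| := by ring_nf
        _ ≤ |slope F x t - d| + |d| := abs_add_le _ _
        _ < 1 + |d| := by linarith
        _ = M := by rw [hM]; ring
    have h3 : ∀ᶠ t in 𝓝[S \ {x}] x, t ∈ S \ {x} := eventually_mem_nhdsWithin
    filter_upwards [h1, h2, h3] with t ht1 ht2 ht3
    rw [Real.dist_eq, sub_zero]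
    calc |slope G x t - f x x * slope F x t| ≤ ε / (2 * M) * |slope F x t| := hkey t ht3 ht1
      _ ≤ ε / (2 * M) * M := by
          apply mul_le_mul_of_nonneg_left ht2.le (by positivity)
      _ = ε / 2 := by field_simp
      _ < ε := by linarith
  have : Tendsto (fun t => (slope G x t - f x x * slope F x t) + f x x * slope F x t)
      (𝓝[S \ {x}] x) (𝓝 (0 + f x x * d)) :=
    hzero.add ((hF.const_mul (f x x)))
  simp only [sub_add_cancel, zero_add] at this
  exact this

lemma param_deriv (ν : Measure ℝ) [IsFiniteMeasure ν] (g g' : ℝ → ℝ)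
    (hg : ∀ y, HasDerivAt g (g' y) y) (hg'c : Continuous g') (hgc : Continuous g)
    (x c : ℝ) :
    HasDerivAt (fun t => ∫ s in Icc 0 c, g (s - t) ∂ν)
      (∫ s in Icc 0 c, -g' (s - x) ∂ν) x := by
  obtain ⟨M, hM⟩ := (isCompact_Icc (a := -(x+1)) (b := c - x + 1)).exists_bound_of_continuousOn
    hg'c.continuousOn
  have key := hasDerivAt_integral_of_dominated_loc_of_deriv_le
    (μ := ν.restrict (Icc 0 c)) (F := fun t s => g (s - t)) (F' := fun t s => -g' (s - t))
    (x₀ := x) (bound := fun _ => |M| + 1) (s := ball x 1) (ball_mem_nhds x one_pos)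
    (Eventually.of_forall fun t =>
      (hgc.comp (continuous_id.sub continuous_const)).aestronglyMeasurable)
    ((hgc.comp (continuous_id.sub continuous_const)).integrableOn_Icc)
    ((hg'c.comp (continuous_id.sub continuous_const)).neg.aestronglyMeasurable)
    ?_ (integrable_const _) ?_
  · exact key.2
  · -- bound
    filter_upwards [ae_restrict_mem measurableSet_Icc] with s hs
    intro t ht
    rw [Real.norm_eq_abs, abs_neg]
    have h1 : s - t ∈ Icc (-(x+1)) (c - x + 1) := by
      rw [mem_ball, Real.dist_eq] at ht
      obtain ⟨ht1, ht2⟩ := abs_lt.mp ht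
      exact ⟨by linarith [hs.1], by linarith [hs.2]⟩
    calc |g' (s - t)| = ‖g' (s - t)‖ := rfl
      _ ≤ M := hM _ h1
      _ ≤ |M| + 1 := by linarith [le_abs_self M]
  · -- differentiability
    filter_upwards with s
    intro t ht
    have h1 : HasDerivAt (fun y : ℝ => s - y) (-1) t := (hasDerivAt_id t).const_sub s
    have h2 := (hg (s - t)).comp t h1
    simpa [Function.comp_def] using h2

lemma iterD_cmul (n : ℕ) (a : ℝ) (f : ℝ → ℝ) (hf : ContDiff ℝ (⊤:ℕ∞) f) (x : ℝ) :
    iteratedDeriv n (fun u => a * f u) x = a * iteratedDeriv n f x := by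
  have hle : (n : WithTop ℕ∞) ≤ ((⊤:ℕ∞) : WithTop ℕ∞) := by exact_mod_cast le_top
  simp only [← iteratedDerivWithin_univ]
  exact iteratedDerivWithin_const_mul (mem_univ x) uniqueDiffOn_univ a
    (((hf.of_le hle).contDiffOn) x (mem_univ x))

/-- Differentiating `x ↦ ∫_{[0,x]} ∂_x^n g_k(s,x) dF^{*k}(s)` for a continuous c.d.f. `F`
(i.e. an atomless probability measure `μ` on `(0,∞)`): wherever the one-sided derivative `d`
of `F^{*k}` exists, the one-sided derivative of the integral is
`∫_{[0,x]} ∂_x^{n+1} g_k(s,x) dF^{*k}(s) + C(k,n) d`, with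
`C(k,n) = (λ/c)^k (n choose k)((q+λ)/c)^{n-k}(-1)^k` for `n ≥ k` and `0` otherwise. -/
theorem stieltjes_integral_higher_deriv (q lam c : ℝ) (hq : 0 ≤ q) (hlam : 0 < lam)
    (hc : 0 < c) (μ : Measure ℝ) [IsProbabilityMeasure μ] (hsupp : μ (Set.Iio 0) = 0)
    (hcont : ∀ x : ℝ, μ {x} = 0) (k n : ℕ) (x : ℝ) (hx : 0 ≤ x) (d : ℝ) (S : Set ℝ)
    (hS : S = Set.Ici x ∨ S = Set.Iic x)
    (hF : HasDerivWithinAt (fun t => ((convPow μ k) (Set.Iic t)).toReal) d S x) :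
    HasDerivWithinAt
      (fun t => ∫ s in Set.Icc (0 : ℝ) t,
        iteratedDeriv n (fun u => gker q lam c k s u) t ∂(convPow μ k))
      ((∫ s in Set.Icc (0 : ℝ) x,
          iteratedDeriv (n + 1) (fun u => gker q lam c k s u) x ∂(convPow μ k)) +
        (if k ≤ n then
            (lam / c) ^ k * (n.choose k : ℝ) * ((q + lam) / c) ^ (n - k) * (-1 : ℝ) ^ k
          else 0) * d)
      S x := by
  classical
  set ν := convPow μ k with hν
  haveI : IsProbabilityMeasure ν := convPow_prob μ k
  have hνsupp : ν (Iio 0) = 0 := convPow_supp μ hsupp k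
  set b : ℝ := -((q + lam) / c) with hb
  set A : ℝ := (lam / c) ^ k / Nat.factorial k with hA
  set φ : ℝ → ℝ := fun v => A * Real.exp (b * v) * v ^ k with hφdef
  have hφeq : φ = fun v => A * (Real.exp (b * v) * v ^ k) := by
    funext v; rw [hφdef]; ring
  have hφ : ContDiff ℝ (⊤:ℕ∞) φ := by
    rw [hφeq]
    exact contDiff_const.mul (expPow_contDiff b k)
  set ψ : ℕ → ℝ → ℝ := fun m => iteratedDeriv m φ with hψ
  have hle : ∀ m : ℕ, (m : WithTop ℕ∞) ≤ ((⊤:ℕ∞) : WithTop ℕ∞) := fun m => by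
    exact_mod_cast le_top
  have hlt : ∀ m : ℕ, (m : WithTop ℕ∞) < ((⊤:ℕ∞) : WithTop ℕ∞) := fun m => by
    exact_mod_cast WithTop.coe_lt_top m
  have hψcont : ∀ m, Continuous (ψ m) := fun m =>
    hφ.continuous_iteratedDeriv m (hle m)
  have hψd : ∀ m y, HasDerivAt (ψ m) (ψ (m+1) y) y := by
    intro m y
    have h1 : Differentiable ℝ (iteratedDeriv m φ) :=
      hφ.differentiable_iteratedDeriv m (hlt m)
    have h2 := (h1 y).hasDerivAt
    show HasDerivAt (iteratedDeriv m φ) (iteratedDeriv (m+1) φ y) y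
    rw [iteratedDeriv_succ]
    exact h2
  have hgker : ∀ s : ℝ, (fun u => gker q lam c k s u) = fun u => φ (s - u) := by
    intro s; funext u; rfl
  have hIker : ∀ (m : ℕ) (s t : ℝ),
      iteratedDeriv m (fun u => gker q lam c k s u) t = (-1:ℝ)^m * ψ m (s - t) := by
    intro m s t
    rw [hgker s, iterD_comp_sub m φ s t]
  set g : ℝ → ℝ := fun v => (-1:ℝ)^n * ψ n v with hg
  set g' : ℝ → ℝ := fun v => (-1:ℝ)^n * ψ (n+1) v with hg'
  have hgc : Continuous g := continuous_const.mul (hψcont n)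
  have hg'c : Continuous g' := continuous_const.mul (hψcont (n+1))
  have hgd : ∀ y, HasDerivAt g (g' y) y := fun y => (hψd n y).const_mul _
  -- rewrite the function
  have hfun : (fun t => ∫ s in Icc (0:ℝ) t,
      iteratedDeriv n (fun u => gker q lam c k s u) t ∂ν)
      = fun t => ((∫ s in Icc (0:ℝ) t, g (s - t) ∂ν) - ∫ s in Icc (0:ℝ) x, g (s - t) ∂ν)
          + ∫ s in Icc (0:ℝ) x, g (s - t) ∂ν := by
    funext t
    rw [sub_add_cancel]
    apply setIntegral_congr_fun measurableSet_Icc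
    intro s _
    exact hIker n s t
  rw [hfun]
  -- two pieces
  have hG2 : HasDerivWithinAt
      (fun t => (∫ s in Icc (0:ℝ) t, g (s - t) ∂ν) - ∫ s in Icc (0:ℝ) x, g (s - t) ∂ν)
      (g (x - x) * d) S x := by
    have := boundary_deriv ν hνsupp (fun s t => g (s - t))
      (hgc.comp (continuous_fst.sub continuous_snd)) x hx d S hS hF
    simpa using this
  have hG1 : HasDerivWithinAt (fun t => ∫ s in Icc (0:ℝ) x, g (s - t) ∂ν)
      (∫ s in Icc (0:ℝ) x, -g' (s - x) ∂ν) S x :=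
    (param_deriv ν g g' hgd hg'c hgc x x).hasDerivWithinAt
  have hsum := hG2.add hG1
  -- identify the derivative
  have hD1 : (∫ s in Icc (0:ℝ) x, -g' (s - x) ∂ν)
      = ∫ s in Icc (0:ℝ) x, iteratedDeriv (n + 1) (fun u => gker q lam c k s u) x ∂ν := by
    apply setIntegral_congr_fun measurableSet_Icc
    intro s _
    show -g' (s - x) = iteratedDeriv (n + 1) (fun u => gker q lam c k s u) x
    rw [hIker (n+1) s x, hg']
    simp only [pow_succ]
    ring
  have hg0 : g (x - x) = (if k ≤ n then
      (lam / c) ^ k * (n.choose k : ℝ) * ((q + lam) / c) ^ (n - k) * (-1 : ℝ) ^ k else 0) := by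
    rw [sub_self]
    show (-1:ℝ)^n * ψ n 0 = _
    have h1 : ψ n 0 = A * iteratedDeriv n (fun u : ℝ => Real.exp (b*u) * u^k) 0 := by
      show iteratedDeriv n φ 0 = A * iteratedDeriv n (fun u : ℝ => Real.exp (b*u) * u^k) 0
      rw [hφeq]
      exact iterD_cmul n A _ (expPow_contDiff b k) 0
    rw [h1, iterD_expPow b n k]
    by_cases hkn : k ≤ n
    · rw [if_pos hkn, if_pos hkn]
      have hfac : (Nat.factorial k : ℝ) ≠ 0 := by
        exact_mod_cast (Nat.factorial_pos k).ne'
      have hbpow : b ^ (n - k) = (-1:ℝ)^(n-k) * ((q+lam)/c)^(n-k) := by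
        rw [hb, neg_eq_neg_one_mul, mul_pow]
      have hsign : ((-1:ℝ))^n * (-1:ℝ)^(n-k) = (-1:ℝ)^k := by
        rw [← pow_add]
        have h : n + (n - k) = 2*(n-k) + k := by omega
        rw [h, pow_add, pow_mul]
        simp
      rw [hA, hbpow]
      field_simp
      linear_combination (n.choose k : ℝ) * hsign
    · rw [if_neg hkn, if_neg hkn]
      ring
  rw [hD1, hg0] at hsum
  exact hsum.congr_deriv (by ring)
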